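/- Let μ be the Lie bracket on ℝ^7 with nonzero basis brackets [e1,e2]=e4, [e1,e3]=e5, [e1,e4]=e6, [e1,e6]=e7, [e2,e3]=e6, [e2,e4]=e7, [e2,e5]=(1/2)e7, [e3,e4]=-(1/2)e7, and let μ̃ be the Lie bracket on ℝ^7 with nonzero basis brackets [e1,e4]=e6, [e2,e5]=(1/2)e7, [e3,e4]=-(1/2)e7. Then the space of derivations of (ℝ^7,μ) has dimension 14, the space of derivations of (ℝ^7,μ̃) has dimension 21, and consequently the Lie algebras (ℝ^7,μ) and (ℝ^7,μ̃) are not isomorphic. -/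
import Mathlib


open Finset

noncomputable section

/-- `ℝ⁷` with its standard basis and standard inner product. -/
abbrev V7 : Type := Fin 7 → ℝ

/-- The standard basis vector `e i`. -/
def e (i : Fin 7) : V7 := Pi.single i 1

/-- The standard inner product on `ℝ⁷`. -/
def dot (x y : V7) : ℝ := ∑ i, x i * y i

/-- Structure constants built from a list of entries `(i, j, k, a)`, each meaning that
`μ (e i) (e j)` has component `a` along `e k` (and `μ (e j) (e i)` has component `-a`);
all unlisted basis brackets are `0`. -/
def toC (L : List (Fin 7 × Fin 7 × Fin 7 × ℝ)) (i j k : Fin 7) : ℝ :=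
  (L.map fun t =>
      (if t.1 = i ∧ t.2.1 = j ∧ t.2.2.1 = k then t.2.2.2 else 0)
    - (if t.1 = j ∧ t.2.1 = i ∧ t.2.2.1 = k then t.2.2.2 else 0)).sum

/-- The bilinear skew-symmetric map on `ℝ⁷` with structure constants `c`. -/
def br (c : Fin 7 → Fin 7 → Fin 7 → ℝ) (x y : V7) : V7 :=
  fun k => ∑ i, ∑ j, x i * y j * c i j k

lemma br_add_left (c : Fin 7 → Fin 7 → Fin 7 → ℝ) (x x' y : V7) :
    br c (x + x') y = br c x y + br c x' y := by
  funext k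
  simp only [br, Pi.add_apply, ← Finset.sum_add_distrib]
  exact Finset.sum_congr rfl fun i _ => Finset.sum_congr rfl fun j _ => by ring

lemma br_smul_left (c : Fin 7 → Fin 7 → Fin 7 → ℝ) (r : ℝ) (x y : V7) :
    br c (r • x) y = r • br c x y := by
  funext k
  simp only [br, Pi.smul_apply, smul_eq_mul, Finset.mul_sum]
  exact Finset.sum_congr rfl fun i _ => Finset.sum_congr rfl fun j _ => by ring

lemma br_add_right (c : Fin 7 → Fin 7 → Fin 7 → ℝ) (x y y' : V7) :
    br c x (y + y') = br c x y + br c x y' := by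
  funext k
  simp only [br, Pi.add_apply, ← Finset.sum_add_distrib]
  exact Finset.sum_congr rfl fun i _ => Finset.sum_congr rfl fun j _ => by ring

lemma br_smul_right (c : Fin 7 → Fin 7 → Fin 7 → ℝ) (r : ℝ) (x y : V7) :
    br c x (r • y) = r • br c x y := by
  funext k
  simp only [br, Pi.smul_apply, smul_eq_mul, Finset.mul_sum]
  exact Finset.sum_congr rfl fun i _ => Finset.sum_congr rfl fun j _ => by ring

lemma br_zero_left (c : Fin 7 → Fin 7 → Fin 7 → ℝ) (y : V7) : br c 0 y = 0 := by
  funext k; simp [br]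

lemma br_zero_right (c : Fin 7 → Fin 7 → Fin 7 → ℝ) (x : V7) : br c x 0 = 0 := by
  funext k; simp [br]

/-- The space of derivations of the algebra `(ℝ⁷, br c)`, i.e. the linear maps `D` with
`D (μ x y) = μ (D x) y + μ x (D y)` for all `x, y`, as a submodule of the endomorphisms. -/
def derivations (c : Fin 7 → Fin 7 → Fin 7 → ℝ) : Submodule ℝ (Module.End ℝ V7) where
  carrier := {D | ∀ x y, D (br c x y) = br c (D x) y + br c x (D y)}
  add_mem' := by
    intro D E hD hE x y
    simp only [LinearMap.add_apply, hD x y, hE x y, br_add_left, br_add_right]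
    abel
  zero_mem' := by
    intro x y
    simp [br_zero_left, br_zero_right]
  smul_mem' := by
    intro r D hD x y
    simp only [LinearMap.smul_apply, hD x y, smul_add, br_smul_left, br_smul_right]

/-- The Jacobi identity for the bracket `br c`. -/
def Jacobi (c : Fin 7 → Fin 7 → Fin 7 → ℝ) : Prop :=
  ∀ x y z : V7, br c (br c x y) z + br c (br c y z) x + br c (br c z x) y = 0

/-- Skew-symmetry of the bracket `br c`. -/
def Skew (c : Fin 7 → Fin 7 → Fin 7 → ℝ) : Prop :=
  ∀ x y : V7, br c x y = - br c y x

/-- The diagonal endomorphism `diag (a 1, …, a 7)` of `ℝ⁷`, `e i ↦ a i • e i`. -/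
def diagL (a : Fin 7 → ℝ) : Module.End ℝ V7 :=
  LinearMap.pi fun i => a i • LinearMap.proj i

/-- Structure constants of `μ`: `[e1,e2]=e4, [e1,e3]=e5, [e1,e4]=e6, [e1,e6]=e7,
[e2,e3]=e6, [e2,e4]=e7, [e2,e5]=(1/2)e7, [e3,e4]=-(1/2)e7`. -/
def ca : Fin 7 → Fin 7 → Fin 7 → ℝ :=
  toC [(0, 1, 3, (1:ℝ)),
   (0, 2, 4, 1),
   (0, 3, 5, 1),
   (0, 5, 6, 1),
   (1, 2, 5, 1),
   (1, 3, 6, 1),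
   (1, 4, 6, 1/2),
   (2, 3, 6, -(1/2))]

/-- Structure constants of `μ̃`: `[e1,e4]=e6, [e2,e5]=(1/2)e7, [e3,e4]=-(1/2)e7`. -/
def cb : Fin 7 → Fin 7 → Fin 7 → ℝ :=
  toC [(0, 3, 5, (1:ℝ)),
   (1, 4, 6, 1/2),
   (2, 3, 6, -(1/2))]

lemma vext (f g : V7) (h0 : f 0 = g 0) (h1 : f 1 = g 1) (h2 : f 2 = g 2) (h3 : f 3 = g 3)
    (h4 : f 4 = g 4) (h5 : f 5 = g 5) (h6 : f 6 = g 6) : f = g := by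
  funext k; fin_cases k
  exacts [h0, h1, h2, h3, h4, h5, h6]

lemma e_val (i j : Fin 7) : e i j = if j = i then 1 else 0 := by
  simp [e, Pi.single_apply]

lemma single_decomp (x : V7) : x = ∑ l, x l • e l := by
  funext m
  rw [Finset.sum_apply]
  simp [e, Pi.single_apply, Finset.sum_ite_eq]

lemma end_ext {f g : Module.End ℝ V7} (h : ∀ l, f (e l) = g (e l)) : f = g := by
  refine LinearMap.ext fun x => ?_
  rw [single_decomp x, map_sum, map_sum]
  simp [h]

lemma end_ext7 {f g : Module.End ℝ V7} (h0 : f (e 0) = g (e 0)) (h1 : f (e 1) = g (e 1))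
    (h2 : f (e 2) = g (e 2)) (h3 : f (e 3) = g (e 3)) (h4 : f (e 4) = g (e 4))
    (h5 : f (e 5) = g (e 5)) (h6 : f (e 6) = g (e 6)) : f = g := by
  refine end_ext fun l => ?_
  fin_cases l
  exacts [h0, h1, h2, h3, h4, h5, h6]

lemma apply_eq (D : Module.End ℝ V7) (x : V7) (k : Fin 7) : D x k = ∑ l, x l * D (e l) k := by
  conv_lhs => rw [single_decomp x]
  rw [map_sum, Finset.sum_apply]
  simp

lemma hs_gen (c : Fin 7 → Fin 7 → Fin 7 → ℝ) (D : Module.End ℝ V7)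
    (hD : ∀ x y, D (br c x y) = br c (D x) y + br c x (D y)) (i j k : Fin 7) :
    ∑ l, (br c (e i) (e j)) l * D (e l) k
      = br c (D (e i)) (e j) k + br c (e i) (D (e j)) k := by
  rw [← apply_eq]
  simpa using congrFun (hD (e i) (e j)) k

lemma brA0 (x y : V7) : br ca x y 0 = 0 := by
  simp [br, ca, toC, Fin.sum_univ_seven]

lemma brA1 (x y : V7) : br ca x y 1 = 0 := by
  simp [br, ca, toC, Fin.sum_univ_seven]

lemma brA2 (x y : V7) : br ca x y 2 = 0 := by
  simp [br, ca, toC, Fin.sum_univ_seven]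

lemma brA3 (x y : V7) : br ca x y 3 = (1 : ℝ) * (x 0 * y 1 - x 1 * y 0) := by
  simp [br, ca, toC, Fin.sum_univ_seven]; ring

lemma brA4 (x y : V7) : br ca x y 4 = (1 : ℝ) * (x 0 * y 2 - x 2 * y 0) := by
  simp [br, ca, toC, Fin.sum_univ_seven]; ring

lemma brA5 (x y : V7) : br ca x y 5 = (1 : ℝ) * (x 0 * y 3 - x 3 * y 0) + (1 : ℝ) * (x 1 * y 2 - x 2 * y 1) := by
  simp [br, ca, toC, Fin.sum_univ_seven]; ring

lemma brA6 (x y : V7) : br ca x y 6 = (1 : ℝ) * (x 0 * y 5 - x 5 * y 0) + (1 : ℝ) * (x 1 * y 3 - x 3 * y 1) + (1/2 : ℝ) * (x 1 * y 4 - x 4 * y 1) + (-1/2 : ℝ) * (x 2 * y 3 - x 3 * y 2) := by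
  simp [br, ca, toC, Fin.sum_univ_seven]; ring

def MA (q : Fin 14 → ℝ) : Matrix (Fin 7) (Fin 7) ℝ := Matrix.of fun k l =>
  if k = 0 then (if l = 0 then (1/5 : ℝ) * q 13 else if l = 1 then (0 : ℝ) else if l = 2 then (0 : ℝ) else if l = 3 then (0 : ℝ) else if l = 4 then (0 : ℝ) else if l = 5 then (0 : ℝ) else (0 : ℝ)) else
  if k = 1 then (if l = 0 then (-2 : ℝ) * q 6 else if l = 1 then (2/5 : ℝ) * q 13 else if l = 2 then (0 : ℝ) else if l = 3 then (0 : ℝ) else if l = 4 then (0 : ℝ) else if l = 5 then (0 : ℝ) else (0 : ℝ)) else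
  if k = 2 then (if l = 0 then (2 : ℝ) * q 5 + (-4 : ℝ) * q 6 + (-2 : ℝ) * q 12 else if l = 1 then (1 : ℝ) * q 1 else if l = 2 then (2/5 : ℝ) * q 13 else if l = 3 then (0 : ℝ) else if l = 4 then (0 : ℝ) else if l = 5 then (0 : ℝ) else (0 : ℝ)) else
  if k = 3 then (if l = 0 then (-2 : ℝ) * q 4 + (2 : ℝ) * q 11 else if l = 1 then (3 : ℝ) * q 5 + (-4 : ℝ) * q 6 + (-2 : ℝ) * q 12 else if l = 2 then (3 : ℝ) * q 6 else if l = 3 then (3/5 : ℝ) * q 13 else if l = 4 then (0 : ℝ) else if l = 5 then (0 : ℝ) else (0 : ℝ)) else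
  if k = 4 then (if l = 0 then (2 : ℝ) * q 3 + (4 : ℝ) * q 4 + (-2 : ℝ) * q 10 + (-4 : ℝ) * q 11 else if l = 1 then q 0 else if l = 2 then (-3 : ℝ) * q 5 + (-2 : ℝ) * q 6 + (4 : ℝ) * q 12 else if l = 3 then q 1 else if l = 4 then (3/5 : ℝ) * q 13 else if l = 5 then (0 : ℝ) else (0 : ℝ)) else
  if k = 5 then (if l = 0 then q 2 else if l = 1 then q 3 else if l = 2 then q 4 else if l = 3 then q 5 else if l = 4 then q 6 else if l = 5 then (4/5 : ℝ) * q 13 else (0 : ℝ)) else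
  (if l = 0 then q 7 else if l = 1 then q 8 else if l = 2 then q 9 else if l = 3 then q 10 else if l = 4 then q 11 else if l = 5 then q 12 else q 13)

def PhiA (q : Fin 14 → ℝ) : Module.End ℝ V7 := Matrix.toLin' (MA q)

lemma PhiA_apply (q : Fin 14 → ℝ) (x : V7) (k : Fin 7) :
    PhiA q x k = ∑ l, MA q k l * x l := by
  simp [PhiA, Matrix.toLin'_apply, Matrix.mulVec, dotProduct]

lemma PhiA_e (q : Fin 14 → ℝ) (l k : Fin 7) : PhiA q (e l) k = MA q k l := by
  simp [PhiA_apply, e_val, mul_ite, Finset.sum_ite_eq]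

lemma MAv00 (q : Fin 14 → ℝ) : MA q 0 0 = (1/5 : ℝ) * q 13 := rfl
lemma MAv01 (q : Fin 14 → ℝ) : MA q 0 1 = (0 : ℝ) := rfl
lemma MAv02 (q : Fin 14 → ℝ) : MA q 0 2 = (0 : ℝ) := rfl
lemma MAv03 (q : Fin 14 → ℝ) : MA q 0 3 = (0 : ℝ) := rfl
lemma MAv04 (q : Fin 14 → ℝ) : MA q 0 4 = (0 : ℝ) := rfl
lemma MAv05 (q : Fin 14 → ℝ) : MA q 0 5 = (0 : ℝ) := rfl
lemma MAv06 (q : Fin 14 → ℝ) : MA q 0 6 = (0 : ℝ) := rfl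
lemma MAv10 (q : Fin 14 → ℝ) : MA q 1 0 = (-2 : ℝ) * q 6 := rfl
lemma MAv11 (q : Fin 14 → ℝ) : MA q 1 1 = (2/5 : ℝ) * q 13 := rfl
lemma MAv12 (q : Fin 14 → ℝ) : MA q 1 2 = (0 : ℝ) := rfl
lemma MAv13 (q : Fin 14 → ℝ) : MA q 1 3 = (0 : ℝ) := rfl
lemma MAv14 (q : Fin 14 → ℝ) : MA q 1 4 = (0 : ℝ) := rfl
lemma MAv15 (q : Fin 14 → ℝ) : MA q 1 5 = (0 : ℝ) := rfl
lemma MAv16 (q : Fin 14 → ℝ) : MA q 1 6 = (0 : ℝ) := rfl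
lemma MAv20 (q : Fin 14 → ℝ) : MA q 2 0 = (2 : ℝ) * q 5 + (-4 : ℝ) * q 6 + (-2 : ℝ) * q 12 := rfl
lemma MAv21 (q : Fin 14 → ℝ) : MA q 2 1 = (1 : ℝ) * q 1 := rfl
lemma MAv22 (q : Fin 14 → ℝ) : MA q 2 2 = (2/5 : ℝ) * q 13 := rfl
lemma MAv23 (q : Fin 14 → ℝ) : MA q 2 3 = (0 : ℝ) := rfl
lemma MAv24 (q : Fin 14 → ℝ) : MA q 2 4 = (0 : ℝ) := rfl
lemma MAv25 (q : Fin 14 → ℝ) : MA q 2 5 = (0 : ℝ) := rfl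
lemma MAv26 (q : Fin 14 → ℝ) : MA q 2 6 = (0 : ℝ) := rfl
lemma MAv30 (q : Fin 14 → ℝ) : MA q 3 0 = (-2 : ℝ) * q 4 + (2 : ℝ) * q 11 := rfl
lemma MAv31 (q : Fin 14 → ℝ) : MA q 3 1 = (3 : ℝ) * q 5 + (-4 : ℝ) * q 6 + (-2 : ℝ) * q 12 := rfl
lemma MAv32 (q : Fin 14 → ℝ) : MA q 3 2 = (3 : ℝ) * q 6 := rfl
lemma MAv33 (q : Fin 14 → ℝ) : MA q 3 3 = (3/5 : ℝ) * q 13 := rfl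
lemma MAv34 (q : Fin 14 → ℝ) : MA q 3 4 = (0 : ℝ) := rfl
lemma MAv35 (q : Fin 14 → ℝ) : MA q 3 5 = (0 : ℝ) := rfl
lemma MAv36 (q : Fin 14 → ℝ) : MA q 3 6 = (0 : ℝ) := rfl
lemma MAv40 (q : Fin 14 → ℝ) : MA q 4 0 = (2 : ℝ) * q 3 + (4 : ℝ) * q 4 + (-2 : ℝ) * q 10 + (-4 : ℝ) * q 11 := rfl
lemma MAv41 (q : Fin 14 → ℝ) : MA q 4 1 = q 0 := rfl
lemma MAv42 (q : Fin 14 → ℝ) : MA q 4 2 = (-3 : ℝ) * q 5 + (-2 : ℝ) * q 6 + (4 : ℝ) * q 12 := rfl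
lemma MAv43 (q : Fin 14 → ℝ) : MA q 4 3 = q 1 := rfl
lemma MAv44 (q : Fin 14 → ℝ) : MA q 4 4 = (3/5 : ℝ) * q 13 := rfl
lemma MAv45 (q : Fin 14 → ℝ) : MA q 4 5 = (0 : ℝ) := rfl
lemma MAv46 (q : Fin 14 → ℝ) : MA q 4 6 = (0 : ℝ) := rfl
lemma MAv50 (q : Fin 14 → ℝ) : MA q 5 0 = q 2 := rfl
lemma MAv51 (q : Fin 14 → ℝ) : MA q 5 1 = q 3 := rfl
lemma MAv52 (q : Fin 14 → ℝ) : MA q 5 2 = q 4 := rfl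
lemma MAv53 (q : Fin 14 → ℝ) : MA q 5 3 = q 5 := rfl
lemma MAv54 (q : Fin 14 → ℝ) : MA q 5 4 = q 6 := rfl
lemma MAv55 (q : Fin 14 → ℝ) : MA q 5 5 = (4/5 : ℝ) * q 13 := rfl
lemma MAv56 (q : Fin 14 → ℝ) : MA q 5 6 = (0 : ℝ) := rfl
lemma MAv60 (q : Fin 14 → ℝ) : MA q 6 0 = q 7 := rfl
lemma MAv61 (q : Fin 14 → ℝ) : MA q 6 1 = q 8 := rfl
lemma MAv62 (q : Fin 14 → ℝ) : MA q 6 2 = q 9 := rfl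
lemma MAv63 (q : Fin 14 → ℝ) : MA q 6 3 = q 10 := rfl
lemma MAv64 (q : Fin 14 → ℝ) : MA q 6 4 = q 11 := rfl
lemma MAv65 (q : Fin 14 → ℝ) : MA q 6 5 = q 12 := rfl
lemma MAv66 (q : Fin 14 → ℝ) : MA q 6 6 = q 13 := rfl

def piA : Module.End ℝ V7 →ₗ[ℝ] (Fin 14 → ℝ) where
  toFun D := fun m => if m = 0 then D (e 1) 4 else if m = 1 then D (e 3) 4 else if m = 2 then D (e 0) 5 else if m = 3 then D (e 1) 5 else if m = 4 then D (e 2) 5 else if m = 5 then D (e 3) 5 else if m = 6 then D (e 4) 5 else if m = 7 then D (e 0) 6 else if m = 8 then D (e 1) 6 else if m = 9 then D (e 2) 6 else if m = 10 then D (e 3) 6 else if m = 11 then D (e 4) 6 else if m = 12 then D (e 5) 6 else D (e 6) 6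
  map_add' D E := by
    funext m
    fin_cases m <;> simp
  map_smul' r D := by
    funext m
    fin_cases m <;> simp

lemma piA_apply (D : Module.End ℝ V7) (m : Fin 14) :
    piA D m = if m = 0 then D (e 1) 4 else if m = 1 then D (e 3) 4 else if m = 2 then D (e 0) 5 else if m = 3 then D (e 1) 5 else if m = 4 then D (e 2) 5 else if m = 5 then D (e 3) 5 else if m = 6 then D (e 4) 5 else if m = 7 then D (e 0) 6 else if m = 8 then D (e 1) 6 else if m = 9 then D (e 2) 6 else if m = 10 then D (e 3) 6 else if m = 11 then D (e 4) 6 else if m = 12 then D (e 5) 6 else D (e 6) 6 := rfl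

lemma piAv0 (D : Module.End ℝ V7) : piA D 0 = D (e 1) 4 := rfl
lemma piAv1 (D : Module.End ℝ V7) : piA D 1 = D (e 3) 4 := rfl
lemma piAv2 (D : Module.End ℝ V7) : piA D 2 = D (e 0) 5 := rfl
lemma piAv3 (D : Module.End ℝ V7) : piA D 3 = D (e 1) 5 := rfl
lemma piAv4 (D : Module.End ℝ V7) : piA D 4 = D (e 2) 5 := rfl
lemma piAv5 (D : Module.End ℝ V7) : piA D 5 = D (e 3) 5 := rfl
lemma piAv6 (D : Module.End ℝ V7) : piA D 6 = D (e 4) 5 := rfl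
lemma piAv7 (D : Module.End ℝ V7) : piA D 7 = D (e 0) 6 := rfl
lemma piAv8 (D : Module.End ℝ V7) : piA D 8 = D (e 1) 6 := rfl
lemma piAv9 (D : Module.End ℝ V7) : piA D 9 = D (e 2) 6 := rfl
lemma piAv10 (D : Module.End ℝ V7) : piA D 10 = D (e 3) 6 := rfl
lemma piAv11 (D : Module.End ℝ V7) : piA D 11 = D (e 4) 6 := rfl
lemma piAv12 (D : Module.End ℝ V7) : piA D 12 = D (e 5) 6 := rfl
lemma piAv13 (D : Module.End ℝ V7) : piA D 13 = D (e 6) 6 := rfl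

lemma memA (q : Fin 14 → ℝ) : ∀ x y : V7,
    PhiA q (br ca x y) = br ca (PhiA q x) y + br ca x (PhiA q y) := by
  intro x y
  refine vext _ _ ?_ ?_ ?_ ?_ ?_ ?_ ?_ <;>
    simp [PhiA_apply, MA, Pi.add_apply, brA0, brA1, brA2, brA3, brA4, brA5, brA6, Fin.sum_univ_seven] <;> ring

set_option maxHeartbeats 2000000 in
lemma keyA (D : Module.End ℝ V7)
    (hD : ∀ x y, D (br ca x y) = br ca (D x) y + br ca x (D y)) :
    PhiA (piA D) = D := by
  have h0 := hs_gen ca D hD 0 1 0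
  have h1 := hs_gen ca D hD 0 1 1
  have h2 := hs_gen ca D hD 0 1 2
  have h3 := hs_gen ca D hD 0 1 3
  have h4 := hs_gen ca D hD 0 1 4
  have h5 := hs_gen ca D hD 0 1 5
  have h6 := hs_gen ca D hD 0 1 6
  have h7 := hs_gen ca D hD 0 2 0
  have h8 := hs_gen ca D hD 0 2 1
  have h9 := hs_gen ca D hD 0 2 2
  have h10 := hs_gen ca D hD 0 2 3
  have h11 := hs_gen ca D hD 0 2 4
  have h12 := hs_gen ca D hD 0 2 5
  have h13 := hs_gen ca D hD 0 2 6
  have h14 := hs_gen ca D hD 0 3 0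
  have h15 := hs_gen ca D hD 0 3 1
  have h16 := hs_gen ca D hD 0 3 2
  have h17 := hs_gen ca D hD 0 3 3
  have h18 := hs_gen ca D hD 0 3 4
  have h19 := hs_gen ca D hD 0 3 5
  have h20 := hs_gen ca D hD 0 3 6
  have h21 := hs_gen ca D hD 0 4 5
  have h22 := hs_gen ca D hD 0 4 6
  have h23 := hs_gen ca D hD 0 5 0
  have h24 := hs_gen ca D hD 0 5 1
  have h25 := hs_gen ca D hD 0 5 2
  have h26 := hs_gen ca D hD 0 5 3
  have h27 := hs_gen ca D hD 0 5 4
  have h28 := hs_gen ca D hD 0 5 5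
  have h29 := hs_gen ca D hD 0 5 6
  have h30 := hs_gen ca D hD 1 2 3
  have h31 := hs_gen ca D hD 1 2 4
  have h32 := hs_gen ca D hD 1 2 5
  have h33 := hs_gen ca D hD 1 2 6
  have h34 := hs_gen ca D hD 1 3 6
  simp only [Fin.sum_univ_seven, brA0, brA1, brA2, brA3, brA4, brA5, brA6, e_val, Fin.reduceEq, reduceIte] at h0 h1 h2 h3 h4 h5 h6 h7 h8 h9 h10 h11 h12 h13 h14 h15 h16 h17 h18 h19 h20 h21 h22 h23 h24 h25 h26 h27 h28 h29 h30 h31 h32 h33 h34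
  refine end_ext7 (vext _ _ ?_ ?_ ?_ ?_ ?_ ?_ ?_) (vext _ _ ?_ ?_ ?_ ?_ ?_ ?_ ?_) (vext _ _ ?_ ?_ ?_ ?_ ?_ ?_ ?_) (vext _ _ ?_ ?_ ?_ ?_ ?_ ?_ ?_) (vext _ _ ?_ ?_ ?_ ?_ ?_ ?_ ?_) (vext _ _ ?_ ?_ ?_ ?_ ?_ ?_ ?_) (vext _ _ ?_ ?_ ?_ ?_ ?_ ?_ ?_)
  · -- entry row 0 col 0
    rw [PhiA_e]
    simp only [MAv00, piAv0, piAv1, piAv2, piAv3, piAv4, piAv5, piAv6, piAv7, piAv8, piAv9, piAv10, piAv11, piAv12, piAv13]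
    linear_combination (1/5 : ℝ) * h3 + (-1/10 : ℝ) * h4 + (2/5 : ℝ) * h19 + (2/5 : ℝ) * h29 + (-1/5 : ℝ) * h34
  · -- entry row 1 col 0
    rw [PhiA_e]
    simp only [MAv10, piAv0, piAv1, piAv2, piAv3, piAv4, piAv5, piAv6, piAv7, piAv8, piAv9, piAv10, piAv11, piAv12, piAv13]
    linear_combination (2 : ℝ) * h22
  · -- entry row 2 col 0
    rw [PhiA_e]
    simp only [MAv20, piAv0, piAv1, piAv2, piAv3, piAv4, piAv5, piAv6, piAv7, piAv8, piAv9, piAv10, piAv11, piAv12, piAv13]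
    linear_combination (-2 : ℝ) * h20 + (4 : ℝ) * h22
  · -- entry row 3 col 0
    rw [PhiA_e]
    simp only [MAv30, piAv0, piAv1, piAv2, piAv3, piAv4, piAv5, piAv6, piAv7, piAv8, piAv9, piAv10, piAv11, piAv12, piAv13]
    linear_combination (2 : ℝ) * h13
  · -- entry row 4 col 0
    rw [PhiA_e]
    simp only [MAv40, piAv0, piAv1, piAv2, piAv3, piAv4, piAv5, piAv6, piAv7, piAv8, piAv9, piAv10, piAv11, piAv12, piAv13]
    linear_combination (-2 : ℝ) * h6 + (-4 : ℝ) * h13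
  · -- entry row 5 col 0
    rw [PhiA_e]
    simp only [MAv50, piAv0, piAv1, piAv2, piAv3, piAv4, piAv5, piAv6, piAv7, piAv8, piAv9, piAv10, piAv11, piAv12, piAv13]
  · -- entry row 6 col 0
    rw [PhiA_e]
    simp only [MAv60, piAv0, piAv1, piAv2, piAv3, piAv4, piAv5, piAv6, piAv7, piAv8, piAv9, piAv10, piAv11, piAv12, piAv13]
  · -- entry row 0 col 1
    rw [PhiA_e]
    simp only [MAv01, piAv0, piAv1, piAv2, piAv3, piAv4, piAv5, piAv6, piAv7, piAv8, piAv9, piAv10, piAv11, piAv12, piAv13]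
    linear_combination -h2 - h18 + h31
  · -- entry row 1 col 1
    rw [PhiA_e]
    simp only [MAv11, piAv0, piAv1, piAv2, piAv3, piAv4, piAv5, piAv6, piAv7, piAv8, piAv9, piAv10, piAv11, piAv12, piAv13]
    linear_combination (2/5 : ℝ) * h3 + (3/10 : ℝ) * h4 + (-1/5 : ℝ) * h19 + (-1/5 : ℝ) * h29 + (3/5 : ℝ) * h34
  · -- entry row 2 col 1
    rw [PhiA_e]
    simp only [MAv21, piAv0, piAv1, piAv2, piAv3, piAv4, piAv5, piAv6, piAv7, piAv8, piAv9, piAv10, piAv11, piAv12, piAv13]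
    linear_combination h4
  · -- entry row 3 col 1
    rw [PhiA_e]
    simp only [MAv31, piAv0, piAv1, piAv2, piAv3, piAv4, piAv5, piAv6, piAv7, piAv8, piAv9, piAv10, piAv11, piAv12, piAv13]
    linear_combination h5 + (-2 : ℝ) * h20 + (4 : ℝ) * h22
  · -- entry row 4 col 1
    rw [PhiA_e]
    simp only [MAv41, piAv0, piAv1, piAv2, piAv3, piAv4, piAv5, piAv6, piAv7, piAv8, piAv9, piAv10, piAv11, piAv12, piAv13]
  · -- entry row 5 col 1
    rw [PhiA_e]
    simp only [MAv51, piAv0, piAv1, piAv2, piAv3, piAv4, piAv5, piAv6, piAv7, piAv8, piAv9, piAv10, piAv11, piAv12, piAv13]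
  · -- entry row 6 col 1
    rw [PhiA_e]
    simp only [MAv61, piAv0, piAv1, piAv2, piAv3, piAv4, piAv5, piAv6, piAv7, piAv8, piAv9, piAv10, piAv11, piAv12, piAv13]
  · -- entry row 0 col 2
    rw [PhiA_e]
    simp only [MAv02, piAv0, piAv1, piAv2, piAv3, piAv4, piAv5, piAv6, piAv7, piAv8, piAv9, piAv10, piAv11, piAv12, piAv13]
    linear_combination h1 + h17 - h30
  · -- entry row 1 col 2
    rw [PhiA_e]
    simp only [MAv12, piAv0, piAv1, piAv2, piAv3, piAv4, piAv5, piAv6, piAv7, piAv8, piAv9, piAv10, piAv11, piAv12, piAv13]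
    linear_combination h10 + h21
  · -- entry row 2 col 2
    rw [PhiA_e]
    simp only [MAv22, piAv0, piAv1, piAv2, piAv3, piAv4, piAv5, piAv6, piAv7, piAv8, piAv9, piAv10, piAv11, piAv12, piAv13]
    linear_combination (-3/5 : ℝ) * h3 + (-1/5 : ℝ) * h4 + (-1/5 : ℝ) * h19 + (4/5 : ℝ) * h29 + h32 + (-2/5 : ℝ) * h34
  · -- entry row 3 col 2
    rw [PhiA_e]
    simp only [MAv32, piAv0, piAv1, piAv2, piAv3, piAv4, piAv5, piAv6, piAv7, piAv8, piAv9, piAv10, piAv11, piAv12, piAv13]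
    linear_combination h12 + (-2 : ℝ) * h22
  · -- entry row 4 col 2
    rw [PhiA_e]
    simp only [MAv42, piAv0, piAv1, piAv2, piAv3, piAv4, piAv5, piAv6, piAv7, piAv8, piAv9, piAv10, piAv11, piAv12, piAv13]
    linear_combination -h5 + (-2 : ℝ) * h12 + (2 : ℝ) * h20 + (2 : ℝ) * h33
  · -- entry row 5 col 2
    rw [PhiA_e]
    simp only [MAv52, piAv0, piAv1, piAv2, piAv3, piAv4, piAv5, piAv6, piAv7, piAv8, piAv9, piAv10, piAv11, piAv12, piAv13]
  · -- entry row 6 col 2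
    rw [PhiA_e]
    simp only [MAv62, piAv0, piAv1, piAv2, piAv3, piAv4, piAv5, piAv6, piAv7, piAv8, piAv9, piAv10, piAv11, piAv12, piAv13]
  · -- entry row 0 col 3
    rw [PhiA_e]
    simp only [MAv03, piAv0, piAv1, piAv2, piAv3, piAv4, piAv5, piAv6, piAv7, piAv8, piAv9, piAv10, piAv11, piAv12, piAv13]
    linear_combination -h0
  · -- entry row 1 col 3
    rw [PhiA_e]
    simp only [MAv13, piAv0, piAv1, piAv2, piAv3, piAv4, piAv5, piAv6, piAv7, piAv8, piAv9, piAv10, piAv11, piAv12, piAv13]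
    linear_combination -h1
  · -- entry row 2 col 3
    rw [PhiA_e]
    simp only [MAv23, piAv0, piAv1, piAv2, piAv3, piAv4, piAv5, piAv6, piAv7, piAv8, piAv9, piAv10, piAv11, piAv12, piAv13]
    linear_combination -h2
  · -- entry row 3 col 3
    rw [PhiA_e]
    simp only [MAv33, piAv0, piAv1, piAv2, piAv3, piAv4, piAv5, piAv6, piAv7, piAv8, piAv9, piAv10, piAv11, piAv12, piAv13]
    linear_combination (-2/5 : ℝ) * h3 + (1/5 : ℝ) * h4 + (1/5 : ℝ) * h19 + (1/5 : ℝ) * h29 + (2/5 : ℝ) * h34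
  · -- entry row 4 col 3
    rw [PhiA_e]
    simp only [MAv43, piAv0, piAv1, piAv2, piAv3, piAv4, piAv5, piAv6, piAv7, piAv8, piAv9, piAv10, piAv11, piAv12, piAv13]
  · -- entry row 5 col 3
    rw [PhiA_e]
    simp only [MAv53, piAv0, piAv1, piAv2, piAv3, piAv4, piAv5, piAv6, piAv7, piAv8, piAv9, piAv10, piAv11, piAv12, piAv13]
  · -- entry row 6 col 3
    rw [PhiA_e]
    simp only [MAv63, piAv0, piAv1, piAv2, piAv3, piAv4, piAv5, piAv6, piAv7, piAv8, piAv9, piAv10, piAv11, piAv12, piAv13]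
  · -- entry row 0 col 4
    rw [PhiA_e]
    simp only [MAv04, piAv0, piAv1, piAv2, piAv3, piAv4, piAv5, piAv6, piAv7, piAv8, piAv9, piAv10, piAv11, piAv12, piAv13]
    linear_combination -h7
  · -- entry row 1 col 4
    rw [PhiA_e]
    simp only [MAv14, piAv0, piAv1, piAv2, piAv3, piAv4, piAv5, piAv6, piAv7, piAv8, piAv9, piAv10, piAv11, piAv12, piAv13]
    linear_combination -h8
  · -- entry row 2 col 4
    rw [PhiA_e]
    simp only [MAv24, piAv0, piAv1, piAv2, piAv3, piAv4, piAv5, piAv6, piAv7, piAv8, piAv9, piAv10, piAv11, piAv12, piAv13]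
    linear_combination -h9
  · -- entry row 3 col 4
    rw [PhiA_e]
    simp only [MAv34, piAv0, piAv1, piAv2, piAv3, piAv4, piAv5, piAv6, piAv7, piAv8, piAv9, piAv10, piAv11, piAv12, piAv13]
    linear_combination h21
  · -- entry row 4 col 4
    rw [PhiA_e]
    simp only [MAv44, piAv0, piAv1, piAv2, piAv3, piAv4, piAv5, piAv6, piAv7, piAv8, piAv9, piAv10, piAv11, piAv12, piAv13]
    linear_combination (-2/5 : ℝ) * h3 + (-3/10 : ℝ) * h4 - h11 + (1/5 : ℝ) * h19 + (6/5 : ℝ) * h29 + h32 + (-3/5 : ℝ) * h34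
  · -- entry row 5 col 4
    rw [PhiA_e]
    simp only [MAv54, piAv0, piAv1, piAv2, piAv3, piAv4, piAv5, piAv6, piAv7, piAv8, piAv9, piAv10, piAv11, piAv12, piAv13]
  · -- entry row 6 col 4
    rw [PhiA_e]
    simp only [MAv64, piAv0, piAv1, piAv2, piAv3, piAv4, piAv5, piAv6, piAv7, piAv8, piAv9, piAv10, piAv11, piAv12, piAv13]
  · -- entry row 0 col 5
    rw [PhiA_e]
    simp only [MAv05, piAv0, piAv1, piAv2, piAv3, piAv4, piAv5, piAv6, piAv7, piAv8, piAv9, piAv10, piAv11, piAv12, piAv13]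
    linear_combination -h14
  · -- entry row 1 col 5
    rw [PhiA_e]
    simp only [MAv15, piAv0, piAv1, piAv2, piAv3, piAv4, piAv5, piAv6, piAv7, piAv8, piAv9, piAv10, piAv11, piAv12, piAv13]
    linear_combination -h15
  · -- entry row 2 col 5
    rw [PhiA_e]
    simp only [MAv25, piAv0, piAv1, piAv2, piAv3, piAv4, piAv5, piAv6, piAv7, piAv8, piAv9, piAv10, piAv11, piAv12, piAv13]
    linear_combination -h16
  · -- entry row 3 col 5
    rw [PhiA_e]
    simp only [MAv35, piAv0, piAv1, piAv2, piAv3, piAv4, piAv5, piAv6, piAv7, piAv8, piAv9, piAv10, piAv11, piAv12, piAv13]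
    linear_combination -h1 - h17
  · -- entry row 4 col 5
    rw [PhiA_e]
    simp only [MAv45, piAv0, piAv1, piAv2, piAv3, piAv4, piAv5, piAv6, piAv7, piAv8, piAv9, piAv10, piAv11, piAv12, piAv13]
    linear_combination -h2 - h18
  · -- entry row 5 col 5
    rw [PhiA_e]
    simp only [MAv55, piAv0, piAv1, piAv2, piAv3, piAv4, piAv5, piAv6, piAv7, piAv8, piAv9, piAv10, piAv11, piAv12, piAv13]
    linear_combination (-1/5 : ℝ) * h3 + (1/10 : ℝ) * h4 + (-2/5 : ℝ) * h19 + (3/5 : ℝ) * h29 + (1/5 : ℝ) * h34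
  · -- entry row 6 col 5
    rw [PhiA_e]
    simp only [MAv65, piAv0, piAv1, piAv2, piAv3, piAv4, piAv5, piAv6, piAv7, piAv8, piAv9, piAv10, piAv11, piAv12, piAv13]
  · -- entry row 0 col 6
    rw [PhiA_e]
    simp only [MAv06, piAv0, piAv1, piAv2, piAv3, piAv4, piAv5, piAv6, piAv7, piAv8, piAv9, piAv10, piAv11, piAv12, piAv13]
    linear_combination -h23
  · -- entry row 1 col 6
    rw [PhiA_e]
    simp only [MAv16, piAv0, piAv1, piAv2, piAv3, piAv4, piAv5, piAv6, piAv7, piAv8, piAv9, piAv10, piAv11, piAv12, piAv13]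
    linear_combination -h24
  · -- entry row 2 col 6
    rw [PhiA_e]
    simp only [MAv26, piAv0, piAv1, piAv2, piAv3, piAv4, piAv5, piAv6, piAv7, piAv8, piAv9, piAv10, piAv11, piAv12, piAv13]
    linear_combination -h25
  · -- entry row 3 col 6
    rw [PhiA_e]
    simp only [MAv36, piAv0, piAv1, piAv2, piAv3, piAv4, piAv5, piAv6, piAv7, piAv8, piAv9, piAv10, piAv11, piAv12, piAv13]
    linear_combination -h15 - h26
  · -- entry row 4 col 6
    rw [PhiA_e]
    simp only [MAv46, piAv0, piAv1, piAv2, piAv3, piAv4, piAv5, piAv6, piAv7, piAv8, piAv9, piAv10, piAv11, piAv12, piAv13]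
    linear_combination -h16 - h27
  · -- entry row 5 col 6
    rw [PhiA_e]
    simp only [MAv56, piAv0, piAv1, piAv2, piAv3, piAv4, piAv5, piAv6, piAv7, piAv8, piAv9, piAv10, piAv11, piAv12, piAv13]
    linear_combination -h1 - h17 - h28
  · -- entry row 6 col 6
    rw [PhiA_e]
    simp only [MAv66, piAv0, piAv1, piAv2, piAv3, piAv4, piAv5, piAv6, piAv7, piAv8, piAv9, piAv10, piAv11, piAv12, piAv13]

lemma fvext14 (f g : Fin 14 → ℝ) (h0 : f 0 = g 0) (h1 : f 1 = g 1) (h2 : f 2 = g 2) (h3 : f 3 = g 3) (h4 : f 4 = g 4) (h5 : f 5 = g 5) (h6 : f 6 = g 6) (h7 : f 7 = g 7) (h8 : f 8 = g 8) (h9 : f 9 = g 9) (h10 : f 10 = g 10) (h11 : f 11 = g 11) (h12 : f 12 = g 12) (h13 : f 13 = g 13) : f = g := by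
  funext m; fin_cases m
  exacts [h0, h1, h2, h3, h4, h5, h6, h7, h8, h9, h10, h11, h12, h13]

lemma leftA (q : Fin 14 → ℝ) : piA (PhiA q) = q := by
  refine fvext14 _ _ ?_ ?_ ?_ ?_ ?_ ?_ ?_ ?_ ?_ ?_ ?_ ?_ ?_ ?_
  · rw [piAv0, PhiA_e, MAv41]
  · rw [piAv1, PhiA_e, MAv43]
  · rw [piAv2, PhiA_e, MAv50]
  · rw [piAv3, PhiA_e, MAv51]
  · rw [piAv4, PhiA_e, MAv52]
  · rw [piAv5, PhiA_e, MAv53]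
  · rw [piAv6, PhiA_e, MAv54]
  · rw [piAv7, PhiA_e, MAv60]
  · rw [piAv8, PhiA_e, MAv61]
  · rw [piAv9, PhiA_e, MAv62]
  · rw [piAv10, PhiA_e, MAv63]
  · rw [piAv11, PhiA_e, MAv64]
  · rw [piAv12, PhiA_e, MAv65]
  · rw [piAv13, PhiA_e, MAv66]


def eqvA : ↥(derivations ca) ≃ₗ[ℝ] (Fin 14 → ℝ) :=
  LinearEquiv.ofBijective (piA ∘ₗ (derivations ca).subtype)
    ⟨fun D E h => Subtype.ext (by
        have hD := keyA D.1 D.2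
        have hE := keyA E.1 E.2
        rw [← hD, ← hE]
        show PhiA (piA D.1) = PhiA (piA E.1)
        rw [show piA D.1 = piA E.1 from h]),
     fun q => ⟨⟨PhiA q, memA q⟩, leftA q⟩⟩

lemma dimA : Module.finrank ℝ ↥(derivations ca) = 14 := by
  rw [eqvA.finrank_eq]
  exact Module.finrank_fin_fun ℝ

lemma brB0 (x y : V7) : br cb x y 0 = 0 := by
  simp [br, cb, toC, Fin.sum_univ_seven]

lemma brB1 (x y : V7) : br cb x y 1 = 0 := by
  simp [br, cb, toC, Fin.sum_univ_seven]

lemma brB2 (x y : V7) : br cb x y 2 = 0 := by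
  simp [br, cb, toC, Fin.sum_univ_seven]

lemma brB3 (x y : V7) : br cb x y 3 = 0 := by
  simp [br, cb, toC, Fin.sum_univ_seven]

lemma brB4 (x y : V7) : br cb x y 4 = 0 := by
  simp [br, cb, toC, Fin.sum_univ_seven]

lemma brB5 (x y : V7) : br cb x y 5 = (1 : ℝ) * (x 0 * y 3 - x 3 * y 0) := by
  simp [br, cb, toC, Fin.sum_univ_seven]; ring

lemma brB6 (x y : V7) : br cb x y 6 = (1/2 : ℝ) * (x 1 * y 4 - x 4 * y 1) + (-1/2 : ℝ) * (x 2 * y 3 - x 3 * y 2) := by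
  simp [br, cb, toC, Fin.sum_univ_seven]; ring

def MB (q : Fin 21 → ℝ) : Matrix (Fin 7) (Fin 7) ℝ := Matrix.of fun k l =>
  if k = 0 then (if l = 0 then (-1 : ℝ) * q 4 + (1 : ℝ) * q 13 else if l = 1 then (0 : ℝ) else if l = 2 then (0 : ℝ) else if l = 3 then q 0 else if l = 4 then (0 : ℝ) else if l = 5 then (0 : ℝ) else (0 : ℝ)) else
  if k = 1 then (if l = 0 then (0 : ℝ) else if l = 1 then (-1 : ℝ) * q 7 + (1 : ℝ) * q 20 else if l = 2 then (0 : ℝ) else if l = 3 then (-1 : ℝ) * q 3 else if l = 4 then q 1 else if l = 5 then (0 : ℝ) else (0 : ℝ)) else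
  if k = 2 then (if l = 0 then (-2 : ℝ) * q 19 else if l = 1 then (1 : ℝ) * q 6 else if l = 2 then (-1 : ℝ) * q 4 + (1 : ℝ) * q 20 else if l = 3 then q 2 else if l = 4 then q 3 else if l = 5 then (0 : ℝ) else (0 : ℝ)) else
  if k = 3 then (if l = 0 then (0 : ℝ) else if l = 1 then (0 : ℝ) else if l = 2 then (0 : ℝ) else if l = 3 then q 4 else if l = 4 then (0 : ℝ) else if l = 5 then (0 : ℝ) else (0 : ℝ)) else
  if k = 4 then (if l = 0 then (0 : ℝ) else if l = 1 then q 5 else if l = 2 then (0 : ℝ) else if l = 3 then q 6 else if l = 4 then q 7 else if l = 5 then (0 : ℝ) else (0 : ℝ)) else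
  if k = 5 then (if l = 0 then q 8 else if l = 1 then q 9 else if l = 2 then q 10 else if l = 3 then q 11 else if l = 4 then q 12 else if l = 5 then q 13 else (0 : ℝ)) else
  (if l = 0 then q 14 else if l = 1 then q 15 else if l = 2 then q 16 else if l = 3 then q 17 else if l = 4 then q 18 else if l = 5 then q 19 else q 20)

def PhiB (q : Fin 21 → ℝ) : Module.End ℝ V7 := Matrix.toLin' (MB q)

lemma PhiB_apply (q : Fin 21 → ℝ) (x : V7) (k : Fin 7) :
    PhiB q x k = ∑ l, MB q k l * x l := by
  simp [PhiB, Matrix.toLin'_apply, Matrix.mulVec, dotProduct]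

lemma PhiB_e (q : Fin 21 → ℝ) (l k : Fin 7) : PhiB q (e l) k = MB q k l := by
  simp [PhiB_apply, e_val, mul_ite, Finset.sum_ite_eq]

lemma MBv00 (q : Fin 21 → ℝ) : MB q 0 0 = (-1 : ℝ) * q 4 + (1 : ℝ) * q 13 := rfl
lemma MBv01 (q : Fin 21 → ℝ) : MB q 0 1 = (0 : ℝ) := rfl
lemma MBv02 (q : Fin 21 → ℝ) : MB q 0 2 = (0 : ℝ) := rfl
lemma MBv03 (q : Fin 21 → ℝ) : MB q 0 3 = q 0 := rfl
lemma MBv04 (q : Fin 21 → ℝ) : MB q 0 4 = (0 : ℝ) := rfl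
lemma MBv05 (q : Fin 21 → ℝ) : MB q 0 5 = (0 : ℝ) := rfl
lemma MBv06 (q : Fin 21 → ℝ) : MB q 0 6 = (0 : ℝ) := rfl
lemma MBv10 (q : Fin 21 → ℝ) : MB q 1 0 = (0 : ℝ) := rfl
lemma MBv11 (q : Fin 21 → ℝ) : MB q 1 1 = (-1 : ℝ) * q 7 + (1 : ℝ) * q 20 := rfl
lemma MBv12 (q : Fin 21 → ℝ) : MB q 1 2 = (0 : ℝ) := rfl
lemma MBv13 (q : Fin 21 → ℝ) : MB q 1 3 = (-1 : ℝ) * q 3 := rfl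
lemma MBv14 (q : Fin 21 → ℝ) : MB q 1 4 = q 1 := rfl
lemma MBv15 (q : Fin 21 → ℝ) : MB q 1 5 = (0 : ℝ) := rfl
lemma MBv16 (q : Fin 21 → ℝ) : MB q 1 6 = (0 : ℝ) := rfl
lemma MBv20 (q : Fin 21 → ℝ) : MB q 2 0 = (-2 : ℝ) * q 19 := rfl
lemma MBv21 (q : Fin 21 → ℝ) : MB q 2 1 = (1 : ℝ) * q 6 := rfl
lemma MBv22 (q : Fin 21 → ℝ) : MB q 2 2 = (-1 : ℝ) * q 4 + (1 : ℝ) * q 20 := rfl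
lemma MBv23 (q : Fin 21 → ℝ) : MB q 2 3 = q 2 := rfl
lemma MBv24 (q : Fin 21 → ℝ) : MB q 2 4 = q 3 := rfl
lemma MBv25 (q : Fin 21 → ℝ) : MB q 2 5 = (0 : ℝ) := rfl
lemma MBv26 (q : Fin 21 → ℝ) : MB q 2 6 = (0 : ℝ) := rfl
lemma MBv30 (q : Fin 21 → ℝ) : MB q 3 0 = (0 : ℝ) := rfl
lemma MBv31 (q : Fin 21 → ℝ) : MB q 3 1 = (0 : ℝ) := rfl
lemma MBv32 (q : Fin 21 → ℝ) : MB q 3 2 = (0 : ℝ) := rfl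
lemma MBv33 (q : Fin 21 → ℝ) : MB q 3 3 = q 4 := rfl
lemma MBv34 (q : Fin 21 → ℝ) : MB q 3 4 = (0 : ℝ) := rfl
lemma MBv35 (q : Fin 21 → ℝ) : MB q 3 5 = (0 : ℝ) := rfl
lemma MBv36 (q : Fin 21 → ℝ) : MB q 3 6 = (0 : ℝ) := rfl
lemma MBv40 (q : Fin 21 → ℝ) : MB q 4 0 = (0 : ℝ) := rfl
lemma MBv41 (q : Fin 21 → ℝ) : MB q 4 1 = q 5 := rfl
lemma MBv42 (q : Fin 21 → ℝ) : MB q 4 2 = (0 : ℝ) := rfl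
lemma MBv43 (q : Fin 21 → ℝ) : MB q 4 3 = q 6 := rfl
lemma MBv44 (q : Fin 21 → ℝ) : MB q 4 4 = q 7 := rfl
lemma MBv45 (q : Fin 21 → ℝ) : MB q 4 5 = (0 : ℝ) := rfl
lemma MBv46 (q : Fin 21 → ℝ) : MB q 4 6 = (0 : ℝ) := rfl
lemma MBv50 (q : Fin 21 → ℝ) : MB q 5 0 = q 8 := rfl
lemma MBv51 (q : Fin 21 → ℝ) : MB q 5 1 = q 9 := rfl
lemma MBv52 (q : Fin 21 → ℝ) : MB q 5 2 = q 10 := rfl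
lemma MBv53 (q : Fin 21 → ℝ) : MB q 5 3 = q 11 := rfl
lemma MBv54 (q : Fin 21 → ℝ) : MB q 5 4 = q 12 := rfl
lemma MBv55 (q : Fin 21 → ℝ) : MB q 5 5 = q 13 := rfl
lemma MBv56 (q : Fin 21 → ℝ) : MB q 5 6 = (0 : ℝ) := rfl
lemma MBv60 (q : Fin 21 → ℝ) : MB q 6 0 = q 14 := rfl
lemma MBv61 (q : Fin 21 → ℝ) : MB q 6 1 = q 15 := rfl
lemma MBv62 (q : Fin 21 → ℝ) : MB q 6 2 = q 16 := rfl
lemma MBv63 (q : Fin 21 → ℝ) : MB q 6 3 = q 17 := rfl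
lemma MBv64 (q : Fin 21 → ℝ) : MB q 6 4 = q 18 := rfl
lemma MBv65 (q : Fin 21 → ℝ) : MB q 6 5 = q 19 := rfl
lemma MBv66 (q : Fin 21 → ℝ) : MB q 6 6 = q 20 := rfl

def piB : Module.End ℝ V7 →ₗ[ℝ] (Fin 21 → ℝ) where
  toFun D := fun m => if m = 0 then D (e 3) 0 else if m = 1 then D (e 4) 1 else if m = 2 then D (e 3) 2 else if m = 3 then D (e 4) 2 else if m = 4 then D (e 3) 3 else if m = 5 then D (e 1) 4 else if m = 6 then D (e 3) 4 else if m = 7 then D (e 4) 4 else if m = 8 then D (e 0) 5 else if m = 9 then D (e 1) 5 else if m = 10 then D (e 2) 5 else if m = 11 then D (e 3) 5 else if m = 12 then D (e 4) 5 else if m = 13 then D (e 5) 5 else if m = 14 then D (e 0) 6 else if m = 15 then D (e 1) 6 else if m = 16 then D (e 2) 6 else if m = 17 then D (e 3) 6 else if m = 18 then D (e 4) 6 else if m = 19 then D (e 5) 6 else D (e 6) 6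
  map_add' D E := by
    funext m
    fin_cases m <;> simp
  map_smul' r D := by
    funext m
    fin_cases m <;> simp

lemma piB_apply (D : Module.End ℝ V7) (m : Fin 21) :
    piB D m = if m = 0 then D (e 3) 0 else if m = 1 then D (e 4) 1 else if m = 2 then D (e 3) 2 else if m = 3 then D (e 4) 2 else if m = 4 then D (e 3) 3 else if m = 5 then D (e 1) 4 else if m = 6 then D (e 3) 4 else if m = 7 then D (e 4) 4 else if m = 8 then D (e 0) 5 else if m = 9 then D (e 1) 5 else if m = 10 then D (e 2) 5 else if m = 11 then D (e 3) 5 else if m = 12 then D (e 4) 5 else if m = 13 then D (e 5) 5 else if m = 14 then D (e 0) 6 else if m = 15 then D (e 1) 6 else if m = 16 then D (e 2) 6 else if m = 17 then D (e 3) 6 else if m = 18 then D (e 4) 6 else if m = 19 then D (e 5) 6 else D (e 6) 6 := rfl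

lemma piBv0 (D : Module.End ℝ V7) : piB D 0 = D (e 3) 0 := rfl
lemma piBv1 (D : Module.End ℝ V7) : piB D 1 = D (e 4) 1 := rfl
lemma piBv2 (D : Module.End ℝ V7) : piB D 2 = D (e 3) 2 := rfl
lemma piBv3 (D : Module.End ℝ V7) : piB D 3 = D (e 4) 2 := rfl
lemma piBv4 (D : Module.End ℝ V7) : piB D 4 = D (e 3) 3 := rfl
lemma piBv5 (D : Module.End ℝ V7) : piB D 5 = D (e 1) 4 := rfl
lemma piBv6 (D : Module.End ℝ V7) : piB D 6 = D (e 3) 4 := rfl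
lemma piBv7 (D : Module.End ℝ V7) : piB D 7 = D (e 4) 4 := rfl
lemma piBv8 (D : Module.End ℝ V7) : piB D 8 = D (e 0) 5 := rfl
lemma piBv9 (D : Module.End ℝ V7) : piB D 9 = D (e 1) 5 := rfl
lemma piBv10 (D : Module.End ℝ V7) : piB D 10 = D (e 2) 5 := rfl
lemma piBv11 (D : Module.End ℝ V7) : piB D 11 = D (e 3) 5 := rfl
lemma piBv12 (D : Module.End ℝ V7) : piB D 12 = D (e 4) 5 := rfl
lemma piBv13 (D : Module.End ℝ V7) : piB D 13 = D (e 5) 5 := rfl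
lemma piBv14 (D : Module.End ℝ V7) : piB D 14 = D (e 0) 6 := rfl
lemma piBv15 (D : Module.End ℝ V7) : piB D 15 = D (e 1) 6 := rfl
lemma piBv16 (D : Module.End ℝ V7) : piB D 16 = D (e 2) 6 := rfl
lemma piBv17 (D : Module.End ℝ V7) : piB D 17 = D (e 3) 6 := rfl
lemma piBv18 (D : Module.End ℝ V7) : piB D 18 = D (e 4) 6 := rfl
lemma piBv19 (D : Module.End ℝ V7) : piB D 19 = D (e 5) 6 := rfl
lemma piBv20 (D : Module.End ℝ V7) : piB D 20 = D (e 6) 6 := rfl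

lemma memB (q : Fin 21 → ℝ) : ∀ x y : V7,
    PhiB q (br cb x y) = br cb (PhiB q x) y + br cb x (PhiB q y) := by
  intro x y
  refine vext _ _ ?_ ?_ ?_ ?_ ?_ ?_ ?_ <;>
    simp [PhiB_apply, MB, Pi.add_apply, brB0, brB1, brB2, brB3, brB4, brB5, brB6, Fin.sum_univ_seven] <;> ring

set_option maxHeartbeats 2000000 in
lemma keyB (D : Module.End ℝ V7)
    (hD : ∀ x y, D (br cb x y) = br cb (D x) y + br cb x (D y)) :
    PhiB (piB D) = D := by
  have h0 := hs_gen cb D hD 0 1 5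
  have h1 := hs_gen cb D hD 0 1 6
  have h2 := hs_gen cb D hD 0 2 5
  have h3 := hs_gen cb D hD 0 2 6
  have h4 := hs_gen cb D hD 0 3 0
  have h5 := hs_gen cb D hD 0 3 1
  have h6 := hs_gen cb D hD 0 3 2
  have h7 := hs_gen cb D hD 0 3 3
  have h8 := hs_gen cb D hD 0 3 4
  have h9 := hs_gen cb D hD 0 3 5
  have h10 := hs_gen cb D hD 0 3 6
  have h11 := hs_gen cb D hD 0 4 5
  have h12 := hs_gen cb D hD 0 4 6
  have h13 := hs_gen cb D hD 0 6 5
  have h14 := hs_gen cb D hD 1 2 6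
  have h15 := hs_gen cb D hD 1 3 5
  have h16 := hs_gen cb D hD 1 3 6
  have h17 := hs_gen cb D hD 1 4 0
  have h18 := hs_gen cb D hD 1 4 1
  have h19 := hs_gen cb D hD 1 4 2
  have h20 := hs_gen cb D hD 1 4 4
  have h21 := hs_gen cb D hD 1 4 5
  have h22 := hs_gen cb D hD 1 4 6
  have h23 := hs_gen cb D hD 2 3 5
  have h24 := hs_gen cb D hD 2 3 6
  have h25 := hs_gen cb D hD 2 4 6
  have h26 := hs_gen cb D hD 3 4 5
  have h27 := hs_gen cb D hD 3 4 6
  simp only [Fin.sum_univ_seven, brB0, brB1, brB2, brB3, brB4, brB5, brB6, e_val, Fin.reduceEq, reduceIte] at h0 h1 h2 h3 h4 h5 h6 h7 h8 h9 h10 h11 h12 h13 h14 h15 h16 h17 h18 h19 h20 h21 h22 h23 h24 h25 h26 h27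
  refine end_ext7 (vext _ _ ?_ ?_ ?_ ?_ ?_ ?_ ?_) (vext _ _ ?_ ?_ ?_ ?_ ?_ ?_ ?_) (vext _ _ ?_ ?_ ?_ ?_ ?_ ?_ ?_) (vext _ _ ?_ ?_ ?_ ?_ ?_ ?_ ?_) (vext _ _ ?_ ?_ ?_ ?_ ?_ ?_ ?_) (vext _ _ ?_ ?_ ?_ ?_ ?_ ?_ ?_) (vext _ _ ?_ ?_ ?_ ?_ ?_ ?_ ?_)
  · -- entry row 0 col 0
    rw [PhiB_e]
    simp only [MBv00, piBv0, piBv1, piBv2, piBv3, piBv4, piBv5, piBv6, piBv7, piBv8, piBv9, piBv10, piBv11, piBv12, piBv13, piBv14, piBv15, piBv16, piBv17, piBv18, piBv19, piBv20]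
    linear_combination h9
  · -- entry row 1 col 0
    rw [PhiB_e]
    simp only [MBv10, piBv0, piBv1, piBv2, piBv3, piBv4, piBv5, piBv6, piBv7, piBv8, piBv9, piBv10, piBv11, piBv12, piBv13, piBv14, piBv15, piBv16, piBv17, piBv18, piBv19, piBv20]
    linear_combination (2 : ℝ) * h12
  · -- entry row 2 col 0
    rw [PhiB_e]
    simp only [MBv20, piBv0, piBv1, piBv2, piBv3, piBv4, piBv5, piBv6, piBv7, piBv8, piBv9, piBv10, piBv11, piBv12, piBv13, piBv14, piBv15, piBv16, piBv17, piBv18, piBv19, piBv20]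
    linear_combination (-2 : ℝ) * h10
  · -- entry row 3 col 0
    rw [PhiB_e]
    simp only [MBv30, piBv0, piBv1, piBv2, piBv3, piBv4, piBv5, piBv6, piBv7, piBv8, piBv9, piBv10, piBv11, piBv12, piBv13, piBv14, piBv15, piBv16, piBv17, piBv18, piBv19, piBv20]
    linear_combination (2 : ℝ) * h3
  · -- entry row 4 col 0
    rw [PhiB_e]
    simp only [MBv40, piBv0, piBv1, piBv2, piBv3, piBv4, piBv5, piBv6, piBv7, piBv8, piBv9, piBv10, piBv11, piBv12, piBv13, piBv14, piBv15, piBv16, piBv17, piBv18, piBv19, piBv20]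
    linear_combination (-2 : ℝ) * h1
  · -- entry row 5 col 0
    rw [PhiB_e]
    simp only [MBv50, piBv0, piBv1, piBv2, piBv3, piBv4, piBv5, piBv6, piBv7, piBv8, piBv9, piBv10, piBv11, piBv12, piBv13, piBv14, piBv15, piBv16, piBv17, piBv18, piBv19, piBv20]
  · -- entry row 6 col 0
    rw [PhiB_e]
    simp only [MBv60, piBv0, piBv1, piBv2, piBv3, piBv4, piBv5, piBv6, piBv7, piBv8, piBv9, piBv10, piBv11, piBv12, piBv13, piBv14, piBv15, piBv16, piBv17, piBv18, piBv19, piBv20]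
  · -- entry row 0 col 1
    rw [PhiB_e]
    simp only [MBv01, piBv0, piBv1, piBv2, piBv3, piBv4, piBv5, piBv6, piBv7, piBv8, piBv9, piBv10, piBv11, piBv12, piBv13, piBv14, piBv15, piBv16, piBv17, piBv18, piBv19, piBv20]
    linear_combination h15
  · -- entry row 1 col 1
    rw [PhiB_e]
    simp only [MBv11, piBv0, piBv1, piBv2, piBv3, piBv4, piBv5, piBv6, piBv7, piBv8, piBv9, piBv10, piBv11, piBv12, piBv13, piBv14, piBv15, piBv16, piBv17, piBv18, piBv19, piBv20]
    linear_combination (2 : ℝ) * h22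
  · -- entry row 2 col 1
    rw [PhiB_e]
    simp only [MBv21, piBv0, piBv1, piBv2, piBv3, piBv4, piBv5, piBv6, piBv7, piBv8, piBv9, piBv10, piBv11, piBv12, piBv13, piBv14, piBv15, piBv16, piBv17, piBv18, piBv19, piBv20]
    linear_combination (-2 : ℝ) * h16
  · -- entry row 3 col 1
    rw [PhiB_e]
    simp only [MBv31, piBv0, piBv1, piBv2, piBv3, piBv4, piBv5, piBv6, piBv7, piBv8, piBv9, piBv10, piBv11, piBv12, piBv13, piBv14, piBv15, piBv16, piBv17, piBv18, piBv19, piBv20]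
    linear_combination h0
  · -- entry row 4 col 1
    rw [PhiB_e]
    simp only [MBv41, piBv0, piBv1, piBv2, piBv3, piBv4, piBv5, piBv6, piBv7, piBv8, piBv9, piBv10, piBv11, piBv12, piBv13, piBv14, piBv15, piBv16, piBv17, piBv18, piBv19, piBv20]
  · -- entry row 5 col 1
    rw [PhiB_e]
    simp only [MBv51, piBv0, piBv1, piBv2, piBv3, piBv4, piBv5, piBv6, piBv7, piBv8, piBv9, piBv10, piBv11, piBv12, piBv13, piBv14, piBv15, piBv16, piBv17, piBv18, piBv19, piBv20]
  · -- entry row 6 col 1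
    rw [PhiB_e]
    simp only [MBv61, piBv0, piBv1, piBv2, piBv3, piBv4, piBv5, piBv6, piBv7, piBv8, piBv9, piBv10, piBv11, piBv12, piBv13, piBv14, piBv15, piBv16, piBv17, piBv18, piBv19, piBv20]
  · -- entry row 0 col 2
    rw [PhiB_e]
    simp only [MBv02, piBv0, piBv1, piBv2, piBv3, piBv4, piBv5, piBv6, piBv7, piBv8, piBv9, piBv10, piBv11, piBv12, piBv13, piBv14, piBv15, piBv16, piBv17, piBv18, piBv19, piBv20]
    linear_combination h21 + h23
  · -- entry row 1 col 2
    rw [PhiB_e]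
    simp only [MBv12, piBv0, piBv1, piBv2, piBv3, piBv4, piBv5, piBv6, piBv7, piBv8, piBv9, piBv10, piBv11, piBv12, piBv13, piBv14, piBv15, piBv16, piBv17, piBv18, piBv19, piBv20]
    linear_combination h11 + (2 : ℝ) * h25
  · -- entry row 2 col 2
    rw [PhiB_e]
    simp only [MBv22, piBv0, piBv1, piBv2, piBv3, piBv4, piBv5, piBv6, piBv7, piBv8, piBv9, piBv10, piBv11, piBv12, piBv13, piBv14, piBv15, piBv16, piBv17, piBv18, piBv19, piBv20]
    linear_combination (-2 : ℝ) * h24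
  · -- entry row 3 col 2
    rw [PhiB_e]
    simp only [MBv32, piBv0, piBv1, piBv2, piBv3, piBv4, piBv5, piBv6, piBv7, piBv8, piBv9, piBv10, piBv11, piBv12, piBv13, piBv14, piBv15, piBv16, piBv17, piBv18, piBv19, piBv20]
    linear_combination h2
  · -- entry row 4 col 2
    rw [PhiB_e]
    simp only [MBv42, piBv0, piBv1, piBv2, piBv3, piBv4, piBv5, piBv6, piBv7, piBv8, piBv9, piBv10, piBv11, piBv12, piBv13, piBv14, piBv15, piBv16, piBv17, piBv18, piBv19, piBv20]
    linear_combination -h0 + (2 : ℝ) * h14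
  · -- entry row 5 col 2
    rw [PhiB_e]
    simp only [MBv52, piBv0, piBv1, piBv2, piBv3, piBv4, piBv5, piBv6, piBv7, piBv8, piBv9, piBv10, piBv11, piBv12, piBv13, piBv14, piBv15, piBv16, piBv17, piBv18, piBv19, piBv20]
  · -- entry row 6 col 2
    rw [PhiB_e]
    simp only [MBv62, piBv0, piBv1, piBv2, piBv3, piBv4, piBv5, piBv6, piBv7, piBv8, piBv9, piBv10, piBv11, piBv12, piBv13, piBv14, piBv15, piBv16, piBv17, piBv18, piBv19, piBv20]
  · -- entry row 0 col 3
    rw [PhiB_e]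
    simp only [MBv03, piBv0, piBv1, piBv2, piBv3, piBv4, piBv5, piBv6, piBv7, piBv8, piBv9, piBv10, piBv11, piBv12, piBv13, piBv14, piBv15, piBv16, piBv17, piBv18, piBv19, piBv20]
  · -- entry row 1 col 3
    rw [PhiB_e]
    simp only [MBv13, piBv0, piBv1, piBv2, piBv3, piBv4, piBv5, piBv6, piBv7, piBv8, piBv9, piBv10, piBv11, piBv12, piBv13, piBv14, piBv15, piBv16, piBv17, piBv18, piBv19, piBv20]
    linear_combination (2 : ℝ) * h27
  · -- entry row 2 col 3
    rw [PhiB_e]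
    simp only [MBv23, piBv0, piBv1, piBv2, piBv3, piBv4, piBv5, piBv6, piBv7, piBv8, piBv9, piBv10, piBv11, piBv12, piBv13, piBv14, piBv15, piBv16, piBv17, piBv18, piBv19, piBv20]
  · -- entry row 3 col 3
    rw [PhiB_e]
    simp only [MBv33, piBv0, piBv1, piBv2, piBv3, piBv4, piBv5, piBv6, piBv7, piBv8, piBv9, piBv10, piBv11, piBv12, piBv13, piBv14, piBv15, piBv16, piBv17, piBv18, piBv19, piBv20]
  · -- entry row 4 col 3
    rw [PhiB_e]
    simp only [MBv43, piBv0, piBv1, piBv2, piBv3, piBv4, piBv5, piBv6, piBv7, piBv8, piBv9, piBv10, piBv11, piBv12, piBv13, piBv14, piBv15, piBv16, piBv17, piBv18, piBv19, piBv20]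
  · -- entry row 5 col 3
    rw [PhiB_e]
    simp only [MBv53, piBv0, piBv1, piBv2, piBv3, piBv4, piBv5, piBv6, piBv7, piBv8, piBv9, piBv10, piBv11, piBv12, piBv13, piBv14, piBv15, piBv16, piBv17, piBv18, piBv19, piBv20]
  · -- entry row 6 col 3
    rw [PhiB_e]
    simp only [MBv63, piBv0, piBv1, piBv2, piBv3, piBv4, piBv5, piBv6, piBv7, piBv8, piBv9, piBv10, piBv11, piBv12, piBv13, piBv14, piBv15, piBv16, piBv17, piBv18, piBv19, piBv20]
  · -- entry row 0 col 4
    rw [PhiB_e]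
    simp only [MBv04, piBv0, piBv1, piBv2, piBv3, piBv4, piBv5, piBv6, piBv7, piBv8, piBv9, piBv10, piBv11, piBv12, piBv13, piBv14, piBv15, piBv16, piBv17, piBv18, piBv19, piBv20]
    linear_combination -h26
  · -- entry row 1 col 4
    rw [PhiB_e]
    simp only [MBv14, piBv0, piBv1, piBv2, piBv3, piBv4, piBv5, piBv6, piBv7, piBv8, piBv9, piBv10, piBv11, piBv12, piBv13, piBv14, piBv15, piBv16, piBv17, piBv18, piBv19, piBv20]
  · -- entry row 2 col 4
    rw [PhiB_e]
    simp only [MBv24, piBv0, piBv1, piBv2, piBv3, piBv4, piBv5, piBv6, piBv7, piBv8, piBv9, piBv10, piBv11, piBv12, piBv13, piBv14, piBv15, piBv16, piBv17, piBv18, piBv19, piBv20]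
  · -- entry row 3 col 4
    rw [PhiB_e]
    simp only [MBv34, piBv0, piBv1, piBv2, piBv3, piBv4, piBv5, piBv6, piBv7, piBv8, piBv9, piBv10, piBv11, piBv12, piBv13, piBv14, piBv15, piBv16, piBv17, piBv18, piBv19, piBv20]
    linear_combination h11
  · -- entry row 4 col 4
    rw [PhiB_e]
    simp only [MBv44, piBv0, piBv1, piBv2, piBv3, piBv4, piBv5, piBv6, piBv7, piBv8, piBv9, piBv10, piBv11, piBv12, piBv13, piBv14, piBv15, piBv16, piBv17, piBv18, piBv19, piBv20]
  · -- entry row 5 col 4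
    rw [PhiB_e]
    simp only [MBv54, piBv0, piBv1, piBv2, piBv3, piBv4, piBv5, piBv6, piBv7, piBv8, piBv9, piBv10, piBv11, piBv12, piBv13, piBv14, piBv15, piBv16, piBv17, piBv18, piBv19, piBv20]
  · -- entry row 6 col 4
    rw [PhiB_e]
    simp only [MBv64, piBv0, piBv1, piBv2, piBv3, piBv4, piBv5, piBv6, piBv7, piBv8, piBv9, piBv10, piBv11, piBv12, piBv13, piBv14, piBv15, piBv16, piBv17, piBv18, piBv19, piBv20]
  · -- entry row 0 col 5
    rw [PhiB_e]
    simp only [MBv05, piBv0, piBv1, piBv2, piBv3, piBv4, piBv5, piBv6, piBv7, piBv8, piBv9, piBv10, piBv11, piBv12, piBv13, piBv14, piBv15, piBv16, piBv17, piBv18, piBv19, piBv20]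
    linear_combination -h4
  · -- entry row 1 col 5
    rw [PhiB_e]
    simp only [MBv15, piBv0, piBv1, piBv2, piBv3, piBv4, piBv5, piBv6, piBv7, piBv8, piBv9, piBv10, piBv11, piBv12, piBv13, piBv14, piBv15, piBv16, piBv17, piBv18, piBv19, piBv20]
    linear_combination -h5
  · -- entry row 2 col 5
    rw [PhiB_e]
    simp only [MBv25, piBv0, piBv1, piBv2, piBv3, piBv4, piBv5, piBv6, piBv7, piBv8, piBv9, piBv10, piBv11, piBv12, piBv13, piBv14, piBv15, piBv16, piBv17, piBv18, piBv19, piBv20]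
    linear_combination -h6
  · -- entry row 3 col 5
    rw [PhiB_e]
    simp only [MBv35, piBv0, piBv1, piBv2, piBv3, piBv4, piBv5, piBv6, piBv7, piBv8, piBv9, piBv10, piBv11, piBv12, piBv13, piBv14, piBv15, piBv16, piBv17, piBv18, piBv19, piBv20]
    linear_combination -h7
  · -- entry row 4 col 5
    rw [PhiB_e]
    simp only [MBv45, piBv0, piBv1, piBv2, piBv3, piBv4, piBv5, piBv6, piBv7, piBv8, piBv9, piBv10, piBv11, piBv12, piBv13, piBv14, piBv15, piBv16, piBv17, piBv18, piBv19, piBv20]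
    linear_combination -h8
  · -- entry row 5 col 5
    rw [PhiB_e]
    simp only [MBv55, piBv0, piBv1, piBv2, piBv3, piBv4, piBv5, piBv6, piBv7, piBv8, piBv9, piBv10, piBv11, piBv12, piBv13, piBv14, piBv15, piBv16, piBv17, piBv18, piBv19, piBv20]
  · -- entry row 6 col 5
    rw [PhiB_e]
    simp only [MBv65, piBv0, piBv1, piBv2, piBv3, piBv4, piBv5, piBv6, piBv7, piBv8, piBv9, piBv10, piBv11, piBv12, piBv13, piBv14, piBv15, piBv16, piBv17, piBv18, piBv19, piBv20]
  · -- entry row 0 col 6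
    rw [PhiB_e]
    simp only [MBv06, piBv0, piBv1, piBv2, piBv3, piBv4, piBv5, piBv6, piBv7, piBv8, piBv9, piBv10, piBv11, piBv12, piBv13, piBv14, piBv15, piBv16, piBv17, piBv18, piBv19, piBv20]
    linear_combination (-2 : ℝ) * h17
  · -- entry row 1 col 6
    rw [PhiB_e]
    simp only [MBv16, piBv0, piBv1, piBv2, piBv3, piBv4, piBv5, piBv6, piBv7, piBv8, piBv9, piBv10, piBv11, piBv12, piBv13, piBv14, piBv15, piBv16, piBv17, piBv18, piBv19, piBv20]
    linear_combination (-2 : ℝ) * h18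
  · -- entry row 2 col 6
    rw [PhiB_e]
    simp only [MBv26, piBv0, piBv1, piBv2, piBv3, piBv4, piBv5, piBv6, piBv7, piBv8, piBv9, piBv10, piBv11, piBv12, piBv13, piBv14, piBv15, piBv16, piBv17, piBv18, piBv19, piBv20]
    linear_combination (-2 : ℝ) * h19
  · -- entry row 3 col 6
    rw [PhiB_e]
    simp only [MBv36, piBv0, piBv1, piBv2, piBv3, piBv4, piBv5, piBv6, piBv7, piBv8, piBv9, piBv10, piBv11, piBv12, piBv13, piBv14, piBv15, piBv16, piBv17, piBv18, piBv19, piBv20]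
    linear_combination h13
  · -- entry row 4 col 6
    rw [PhiB_e]
    simp only [MBv46, piBv0, piBv1, piBv2, piBv3, piBv4, piBv5, piBv6, piBv7, piBv8, piBv9, piBv10, piBv11, piBv12, piBv13, piBv14, piBv15, piBv16, piBv17, piBv18, piBv19, piBv20]
    linear_combination (-2 : ℝ) * h20
  · -- entry row 5 col 6
    rw [PhiB_e]
    simp only [MBv56, piBv0, piBv1, piBv2, piBv3, piBv4, piBv5, piBv6, piBv7, piBv8, piBv9, piBv10, piBv11, piBv12, piBv13, piBv14, piBv15, piBv16, piBv17, piBv18, piBv19, piBv20]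
    linear_combination (-2 : ℝ) * h21
  · -- entry row 6 col 6
    rw [PhiB_e]
    simp only [MBv66, piBv0, piBv1, piBv2, piBv3, piBv4, piBv5, piBv6, piBv7, piBv8, piBv9, piBv10, piBv11, piBv12, piBv13, piBv14, piBv15, piBv16, piBv17, piBv18, piBv19, piBv20]

lemma fvext21 (f g : Fin 21 → ℝ) (h0 : f 0 = g 0) (h1 : f 1 = g 1) (h2 : f 2 = g 2) (h3 : f 3 = g 3) (h4 : f 4 = g 4) (h5 : f 5 = g 5) (h6 : f 6 = g 6) (h7 : f 7 = g 7) (h8 : f 8 = g 8) (h9 : f 9 = g 9) (h10 : f 10 = g 10) (h11 : f 11 = g 11) (h12 : f 12 = g 12) (h13 : f 13 = g 13) (h14 : f 14 = g 14) (h15 : f 15 = g 15) (h16 : f 16 = g 16) (h17 : f 17 = g 17) (h18 : f 18 = g 18) (h19 : f 19 = g 19) (h20 : f 20 = g 20) : f = g := by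
  funext m; fin_cases m
  exacts [h0, h1, h2, h3, h4, h5, h6, h7, h8, h9, h10, h11, h12, h13, h14, h15, h16, h17, h18, h19, h20]

lemma leftB (q : Fin 21 → ℝ) : piB (PhiB q) = q := by
  refine fvext21 _ _ ?_ ?_ ?_ ?_ ?_ ?_ ?_ ?_ ?_ ?_ ?_ ?_ ?_ ?_ ?_ ?_ ?_ ?_ ?_ ?_ ?_
  · rw [piBv0, PhiB_e, MBv03]
  · rw [piBv1, PhiB_e, MBv14]
  · rw [piBv2, PhiB_e, MBv23]
  · rw [piBv3, PhiB_e, MBv24]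
  · rw [piBv4, PhiB_e, MBv33]
  · rw [piBv5, PhiB_e, MBv41]
  · rw [piBv6, PhiB_e, MBv43]
  · rw [piBv7, PhiB_e, MBv44]
  · rw [piBv8, PhiB_e, MBv50]
  · rw [piBv9, PhiB_e, MBv51]
  · rw [piBv10, PhiB_e, MBv52]
  · rw [piBv11, PhiB_e, MBv53]
  · rw [piBv12, PhiB_e, MBv54]
  · rw [piBv13, PhiB_e, MBv55]
  · rw [piBv14, PhiB_e, MBv60]
  · rw [piBv15, PhiB_e, MBv61]
  · rw [piBv16, PhiB_e, MBv62]
  · rw [piBv17, PhiB_e, MBv63]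
  · rw [piBv18, PhiB_e, MBv64]
  · rw [piBv19, PhiB_e, MBv65]
  · rw [piBv20, PhiB_e, MBv66]


def eqvB : ↥(derivations cb) ≃ₗ[ℝ] (Fin 21 → ℝ) :=
  LinearEquiv.ofBijective (piB ∘ₗ (derivations cb).subtype)
    ⟨fun D E h => Subtype.ext (by
        have hD := keyB D.1 D.2
        have hE := keyB E.1 E.2
        rw [← hD, ← hE]
        show PhiB (piB D.1) = PhiB (piB E.1)
        rw [show piB D.1 = piB E.1 from h]),
     fun q => ⟨⟨PhiB q, memB q⟩, leftB q⟩⟩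

lemma dimB : Module.finrank ℝ ↥(derivations cb) = 21 := by
  rw [eqvB.finrank_eq]
  exact Module.finrank_fin_fun ℝ


lemma conj_deriv (c c' : Fin 7 → Fin 7 → Fin 7 → ℝ) (g : V7 ≃ₗ[ℝ] V7)
    (hg : ∀ x y, g (br c x y) = br c' (g x) (g y))
    (D : Module.End ℝ V7) (hD : D ∈ derivations c) : g.conj D ∈ derivations c' := by
  intro x y
  have hg' : ∀ u v, g.symm (br c' u v) = br c (g.symm u) (g.symm v) := by
    intro u v
    apply g.injective
    rw [hg, g.apply_symm_apply, g.apply_symm_apply, g.apply_symm_apply]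
  simp only [LinearEquiv.conj_apply_apply, hg', hD (g.symm x) (g.symm y), map_add]
  rw [hg, hg, g.apply_symm_apply, g.apply_symm_apply]

lemma conj_conj (g : V7 ≃ₗ[ℝ] V7) (D : Module.End ℝ V7) :
    g.conj (g.symm.conj D) = D := by
  refine LinearMap.ext fun x => ?_
  simp [LinearEquiv.conj_apply_apply]

lemma conj_conj' (g : V7 ≃ₗ[ℝ] V7) (D : Module.End ℝ V7) :
    g.symm.conj (g.conj D) = D := by
  refine LinearMap.ext fun x => ?_
  simp [LinearEquiv.conj_apply_apply]

/-- The derivations of `(ℝ⁷, μ)` form a space of dimension 14, those of `(ℝ⁷, μ̃)` one of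
dimension 21, and consequently the two Lie algebras are not isomorphic. -/
theorem stmt :
    Module.finrank ℝ ↥(derivations ca) = 14 ∧
    Module.finrank ℝ ↥(derivations cb) = 21 ∧
    ¬ ∃ g : V7 ≃ₗ[ℝ] V7, ∀ x y : V7, g (br ca x y) = br cb (g x) (g y) := by
  refine ⟨dimA, dimB, ?_⟩
  rintro ⟨g, hg⟩
  have hg' : ∀ u v, g.symm (br cb u v) = br ca (g.symm u) (g.symm v) := by
    intro u v
    apply g.injective
    rw [hg, g.apply_symm_apply, g.apply_symm_apply, g.apply_symm_apply]
  have hmap : (derivations ca).map (g.conj : Module.End ℝ V7 →ₗ[ℝ] Module.End ℝ V7)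
      = derivations cb := by
    apply le_antisymm
    · rintro E ⟨D, hD, rfl⟩
      exact conj_deriv ca cb g hg D hD
    · intro D hD
      exact ⟨g.symm.conj D, conj_deriv cb ca g.symm hg' D hD, conj_conj g D⟩
  have h := LinearEquiv.finrank_map_eq g.conj (derivations ca)
  rw [hmap, dimA, dimB] at h
  norm_num at h
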